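/- Let T be a monad on a category C, H : D → C a functor, and suppose (P, α) is a terminal object of the comma category (H_* ↓ TH), whose objects are pairs (S, β) of an endofunctor S on D and a natural transformation β : HS → TH, and morphisms (S, β) → (S', β') are natural transformations γ : S → S' with β' ∘ Hγ = β. Then P carries a unique monad structure making α : HP → TH a Kleisli law, i.e. satisfying α ∘ Hη^P = η^T_H and α ∘ Hμ^P = μ^T_H ∘ Tα ∘ α_P. -/

import Mathlib

open CategoryTheory

universe v₁ v₂ u₁ u₂

/-- If `(P, α)` is terminal in the category `(H_* ↓ TH)` of endofunctors `S` on `D`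
equipped with natural transformations `HS ⟶ TH`, then `P` carries a unique monad
structure making `α` a Kleisli law. -/
theorem unique_monad_structure_of_terminal_in_endofunctors_over_TH
    {C : Type u₁} {D : Type u₂} [Category.{v₁} C] [Category.{v₂} D]
    (T : Monad C) (H : D ⥤ C)
    (P : D ⥤ D) (α : P ⋙ H ⟶ H ⋙ T.toFunctor)
    -- terminality of `(P, α)` in `(H_* ↓ TH)`
    (hterm : ∀ (S : D ⥤ D) (β : S ⋙ H ⟶ H ⋙ T.toFunctor),
      ∃! γ : S ⟶ P, Functor.whiskerRight γ H ≫ α = β) :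
    ∃! um : (𝟭 D ⟶ P) × (P ⋙ P ⟶ P),
      -- monad laws
      (∀ X : D, um.1.app (P.obj X) ≫ um.2.app X = 𝟙 (P.obj X)) ∧
      (∀ X : D, P.map (um.1.app X) ≫ um.2.app X = 𝟙 (P.obj X)) ∧
      (∀ X : D, P.map (um.2.app X) ≫ um.2.app X = um.2.app (P.obj X) ≫ um.2.app X) ∧
      -- `α` is a Kleisli law with respect to this monad structure
      (∀ X : D, H.map (um.1.app X) ≫ α.app X = T.η.app (H.obj X)) ∧
      (∀ X : D, H.map (um.2.app X) ≫ α.app X =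
        α.app (P.obj X) ≫ T.toFunctor.map (α.app X) ≫ T.μ.app (H.obj X)) := by
  classical
  -- the object `(𝟭 D, η^T H)`
  set β₁ : 𝟭 D ⋙ H ⟶ H ⋙ T.toFunctor :=
    { app := fun X => T.η.app (H.obj X)
      naturality := fun X Y f => by simpa using (T.η.naturality (H.map f)) }
  -- the object `(P ⋙ P, μ^T ∘ Tα ∘ αP)`
  set β₂ : (P ⋙ P) ⋙ H ⟶ H ⋙ T.toFunctor :=
    { app := fun X => α.app (P.obj X) ≫ T.toFunctor.map (α.app X) ≫ T.μ.app (H.obj X)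
      naturality := fun X Y f => by
        have h1 := α.naturality (P.map f)
        have h2 := α.naturality f
        have h3 := T.μ.naturality (H.map f)
        simp only [Functor.comp_map, Functor.comp_obj] at h1 h2 h3 ⊢
        rw [reassoc_of% h1, ← Functor.map_comp_assoc, h2, Functor.map_comp_assoc, h3]
        simp }
  obtain ⟨e, he, heu⟩ := hterm (𝟭 D) β₁
  obtain ⟨m, hm, hmu⟩ := hterm (P ⋙ P) β₂
  have he' : ∀ X, H.map (e.app X) ≫ α.app X = T.η.app (H.obj X) := fun X =>
    congrArg (fun t => NatTrans.app t X) he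
  have hm' : ∀ X, H.map (m.app X) ≫ α.app X =
      α.app (P.obj X) ≫ T.toFunctor.map (α.app X) ≫ T.μ.app (H.obj X) := fun X =>
    congrArg (fun t => NatTrans.app t X) hm
  refine ⟨(e, m), ⟨?_, ?_, ?_, he', hm'⟩, ?_⟩
  · -- right unit: `η_{PX} ≫ μ_X = 𝟙`
    set γ : P ⟶ P :=
      { app := fun X => e.app (P.obj X) ≫ m.app X
        naturality := fun X Y f => by
          have h1 := e.naturality (P.map f)
          have h2 := m.naturality f
          simp only [Functor.id_map, Functor.comp_map] at h1 h2
          rw [reassoc_of% h1, h2]; simp }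
    have hγ : Functor.whiskerRight γ H ≫ α = α := by
      ext X
      simp only [NatTrans.comp_app, Functor.whiskerRight_app, γ, Functor.map_comp, Category.assoc]
      rw [hm' X, reassoc_of% (he' (P.obj X))]
      rw [← reassoc_of% (T.η.naturality (α.app X))]
      simp
    have h1 : Functor.whiskerRight (𝟙 P) H ≫ α = α := by simp
    have := (hterm P α).unique hγ h1
    intro X
    exact congrArg (fun t => NatTrans.app t X) this
  · -- left unit: `P(η_X) ≫ μ_X = 𝟙`
    set γ : P ⟶ P :=
      { app := fun X => P.map (e.app X) ≫ m.app X
        naturality := fun X Y f => by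
          have h1 := e.naturality f
          have h2 := m.naturality f
          simp only [Functor.id_map, Functor.comp_map] at h1 h2
          rw [← Functor.map_comp_assoc, h1, Functor.map_comp_assoc, h2]; simp }
    have hγ : Functor.whiskerRight γ H ≫ α = α := by
      ext X
      simp only [NatTrans.comp_app, Functor.whiskerRight_app, γ, Functor.map_comp, Category.assoc]
      rw [hm' X]
      have := α.naturality (e.app X)
      simp only [Functor.comp_map] at this
      rw [reassoc_of% this, ← Functor.map_comp_assoc, he' X]
      simp
    have h1 : Functor.whiskerRight (𝟙 P) H ≫ α = α := by simp
    have := (hterm P α).unique hγ h1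
    intro X
    exact congrArg (fun t => NatTrans.app t X) this
  · -- associativity
    set γ₁ : (P ⋙ P) ⋙ P ⟶ P :=
      { app := fun X => P.map (m.app X) ≫ m.app X
        naturality := fun X Y f => by
          have h1 := m.naturality f
          have h2 := m.naturality f
          simp only [Functor.comp_map] at h1 h2 ⊢
          rw [← Functor.map_comp_assoc, h1, Functor.map_comp_assoc, h2]; simp }
    set γ₂ : (P ⋙ P) ⋙ P ⟶ P :=
      { app := fun X => m.app (P.obj X) ≫ m.app X
        naturality := fun X Y f => by
          have h1 := m.naturality (P.map f)
          have h2 := m.naturality f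
          simp only [Functor.comp_map] at h1 h2 ⊢
          rw [reassoc_of% h1, h2]; simp }
    set β₃ : ((P ⋙ P) ⋙ P) ⋙ H ⟶ H ⋙ T.toFunctor := Functor.whiskerRight γ₁ H ≫ α
    have hγ₂ : Functor.whiskerRight γ₂ H ≫ α = β₃ := by
      ext X
      simp only [β₃, NatTrans.comp_app, Functor.whiskerRight_app, γ₁, γ₂, Functor.map_comp,
        Category.assoc]
      rw [hm' X, reassoc_of% (hm' (P.obj X))]
      have h1 := α.naturality (m.app X)
      simp only [Functor.comp_map] at h1
      conv_rhs => rw [reassoc_of% h1, ← Functor.map_comp_assoc, hm' X]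
      have h2 := T.μ.naturality (α.app X)
      simp only [Functor.comp_map, Functor.id_map, Functor.comp_obj] at h2
      rw [← reassoc_of% h2]
      simp only [Functor.map_comp, Category.assoc]
      congr 2
      rw [(T.assoc (H.obj X)).symm]
    have := (hterm ((P ⋙ P) ⋙ P) β₃).unique rfl hγ₂
    intro X
    simpa [γ₁, γ₂] using congrArg (fun t => NatTrans.app t X) this
  · -- uniqueness
    rintro ⟨e', m'⟩ ⟨-, -, -, h4, h5⟩
    have he2 : Functor.whiskerRight e' H ≫ α = β₁ := by
      ext X; simpa using h4 X
    have hm2 : Functor.whiskerRight m' H ≫ α = β₂ := by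
      ext X; simpa using h5 X
    have := heu e' he2
    have := hmu m' hm2
    simp_all
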